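/- With V⁰,…,Vⁿ, d_k, Δ_k, β_k as in the context, let φ : ℝ → ℝ be a continuous function with φ ≥ 0 and φ(0) = 1, and define ν_k to be the trace of φ(Δ_k), where φ(Δ_k) is obtained from the continuous functional calculus applied to the positive self-adjoint operator Δ_k (equivalently, if Δ_k has eigenvalues λ with eigenspace dimensions m_{k,λ}, then ν_k = Σ_λ φ(λ)·m_{k,λ}). Then for every 0 ≤ k ≤ n one has ν_k - ν_{k-1} + … + (-1)^k ν_0 ≥ β_k - β_{k-1} + … + (-1)^k β_0, and equality holds for k = n. -/

import Mathlib

open Module Finset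



section helpers
variable {V W : Type*} [NormedAddCommGroup V] [InnerProductSpace ℂ V] [FiniteDimensional ℂ V]
  [NormedAddCommGroup W] [InnerProductSpace ℂ W] [FiniteDimensional ℂ W]

/-- Count of eigenvalues in an eigenbasis equals the eigenspace dimension. -/
lemma eig_count {ι : Type*} [Fintype ι] [DecidableEq ι] (T : V →ₗ[ℂ] V)
    (b : Basis ι ℂ V) (c : ι → ℂ) (h : ∀ i, T (b i) = c i • b i) (c0 : ℂ) :
    finrank ℂ (Module.End.eigenspace T c0) =
      (Finset.univ.filter (fun i => c i = c0)).card := by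
  classical
  have hspan : Module.End.eigenspace T c0 = Submodule.span ℂ (b '' {i | c i = c0}) := by
    apply le_antisymm
    · intro v hv
      have hv' : T v = c0 • v := Module.End.mem_eigenspace_iff.mp hv
      rw [Basis.mem_span_image]
      intro i hi
      simp only [Finsupp.mem_support_iff, Finset.mem_coe] at hi
      by_contra hne
      simp only [Set.mem_setOf_eq] at hne
      apply hi
      have hTv : T v = ∑ j, (c j * b.repr v j) • b j := by
        conv_lhs => rw [← b.sum_repr v]
        rw [map_sum]
        refine Finset.sum_congr rfl fun j _ => ?_
        rw [map_smul, h, smul_smul, mul_comm]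
      have h1 : b.repr (T v) i = c i * b.repr v i := by
        rw [hTv, map_sum]
        simp [Finsupp.single_apply]
      have h2 : b.repr (T v) i = c0 * b.repr v i := by
        rw [hv', map_smul]; rfl
      have := h1.symm.trans h2
      have hfac : (c i - c0) * b.repr v i = 0 := by ring_nf; linear_combination this
      rcases mul_eq_zero.mp hfac with h | h
      · exact absurd (by linear_combination h) hne
      · exact h
    · rw [Submodule.span_le]
      rintro _ ⟨i, hi, rfl⟩
      exact Module.End.mem_eigenspace_iff.mpr (by rw [h i, hi])
  rw [hspan]
  have hli : LinearIndependent ℂ (fun i : {i // c i = c0} => b i) :=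
    b.linearIndependent.comp Subtype.val Subtype.val_injective
  have hrange : Set.range (fun i : {i // c i = c0} => b i) = b '' {i | c i = c0} := by
    rw [show (fun i : {i // c i = c0} => b i) = b ∘ Subtype.val from rfl, Set.range_comp,
      Subtype.range_coe_subtype]
  rw [← hrange, finrank_span_eq_card hli, Fintype.card_subtype]

lemma sum_g_count {ι : Type*} [Fintype ι] [DecidableEq ι] (c : ι → ℝ) (S : Finset ℝ)
    (hS : ∀ i, c i ∈ S) (g : ℝ → ℝ) :
    ∑ i, g (c i) = ∑ x ∈ S, g x * ((Finset.univ.filter (fun i => c i = x)).card : ℝ) := by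
  classical
  rw [← Finset.sum_fiberwise_of_maps_to (fun i _ => hS i) (fun i => g (c i))]
  refine Finset.sum_congr rfl fun x hx => ?_
  rw [Finset.sum_congr rfl (fun i hi => show g (c i) = g x by
    rw [(Finset.mem_filter.mp hi).2]), Finset.sum_const, nsmul_eq_mul, mul_comm]

lemma finrank_inf_orthogonal (p q : Submodule ℂ V) (hpq : p ≤ q) :
    finrank ℂ ↥(q ⊓ pᗮ) + finrank ℂ p = finrank ℂ q := by
  classical
  let L : q →ₗ[ℂ] p := p.orthogonalProjectionOnto.toLinearMap.comp q.subtype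
  have hker : LinearMap.ker L = (q ⊓ pᗮ).comap q.subtype := by
    ext x
    simp only [LinearMap.mem_ker, Submodule.mem_comap, Submodule.mem_inf]
    constructor
    · intro hx
      exact ⟨x.2, Submodule.orthogonalProjectionOnto_eq_zero_iff.mp hx⟩
    · intro hx
      exact (Submodule.orthogonalProjectionOnto_eq_zero_iff (K := p) (v := (x : V))).mpr hx.2
  have hrange : LinearMap.range L = ⊤ := by
    rw [LinearMap.range_eq_top]
    intro x
    exact ⟨⟨x, hpq x.2⟩, by simp [L, Submodule.orthogonalProjectionOnto_mem_subspace_eq_self]⟩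
  have hrn := LinearMap.finrank_range_add_finrank_ker L
  rw [hrange, finrank_top] at hrn
  have hker2 : finrank ℂ (LinearMap.ker L) = finrank ℂ ↥(q ⊓ pᗮ) := by
    rw [hker]
    have := LinearEquiv.finrank_eq
      (Submodule.equivMapOfInjective q.subtype q.injective_subtype ((q ⊓ pᗮ).comap q.subtype))
    rw [this, Submodule.map_comap_subtype, inf_eq_right.mpr inf_le_left]
  rw [hker2] at hrn
  omega

lemma ker_adjoint_comp_self (d : V →ₗ[ℂ] W) :
    LinearMap.ker ((LinearMap.adjoint d).comp d) = LinearMap.ker d := by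
  ext x
  simp only [LinearMap.mem_ker, LinearMap.comp_apply]
  constructor
  · intro hx
    have : (inner ℂ (d x) (d x) : ℂ) = 0 := by
      rw [← LinearMap.adjoint_inner_right, hx, inner_zero_right]
    exact inner_self_eq_zero.mp this
  · intro hx; rw [hx, map_zero]

end helpers


set_option linter.unusedSectionVars false

section helpers2
variable {U V W : Type*} [NormedAddCommGroup V] [InnerProductSpace ℂ V] [FiniteDimensional ℂ V]
  [NormedAddCommGroup W] [InnerProductSpace ℂ W] [FiniteDimensional ℂ W]
  [NormedAddCommGroup U] [InnerProductSpace ℂ U] [FiniteDimensional ℂ U]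

/-- Kernel of a Hodge Laplacian `d₀ d₀† + d₁† d₁`. -/
lemma ker_laplacian (d0 : U →ₗ[ℂ] V) (d1 : V →ₗ[ℂ] W) :
    LinearMap.ker (d0.comp (LinearMap.adjoint d0) + (LinearMap.adjoint d1).comp d1)
      = LinearMap.ker (LinearMap.adjoint d0) ⊓ LinearMap.ker d1 := by
  ext x
  simp only [LinearMap.mem_ker, LinearMap.add_apply, LinearMap.comp_apply, Submodule.mem_inf]
  constructor
  · intro hx
    have h0 : (inner ℂ x (d0 (LinearMap.adjoint d0 x) + LinearMap.adjoint d1 (d1 x)) : ℂ) = 0 := by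
      rw [hx, inner_zero_right]
    rw [inner_add_right] at h0
    have e1 : (inner ℂ x (d0 (LinearMap.adjoint d0 x)) : ℂ)
        = inner ℂ (LinearMap.adjoint d0 x) (LinearMap.adjoint d0 x) := by
      rw [LinearMap.adjoint_inner_left]
    have e2 : (inner ℂ x (LinearMap.adjoint d1 (d1 x)) : ℂ) = inner ℂ (d1 x) (d1 x) := by
      rw [LinearMap.adjoint_inner_right]
    rw [e1, e2, inner_self_eq_norm_sq_to_K, inner_self_eq_norm_sq_to_K] at h0
    have h0' : (‖LinearMap.adjoint d0 x‖ ^ 2 + ‖d1 x‖ ^ 2 : ℝ) = 0 := by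
      norm_cast at h0
      rwa [RCLike.ofReal_eq_zero] at h0
    have ha : ‖LinearMap.adjoint d0 x‖ = 0 ∧ ‖d1 x‖ = 0 := by
      constructor <;> nlinarith [sq_nonneg ‖LinearMap.adjoint d0 x‖, sq_nonneg ‖d1 x‖,
        norm_nonneg (LinearMap.adjoint d0 x), norm_nonneg (d1 x)]
    exact ⟨norm_eq_zero.mp ha.1, norm_eq_zero.mp ha.2⟩
  · rintro ⟨h1, h2⟩
    rw [h1, h2, map_zero, map_zero, add_zero]


/-- Nonzero eigenspaces of `d† d` and `d d†` have the same dimension. -/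
lemma finrank_eig_adjoint_comm (d : V →ₗ[ℂ] W) {lam : ℂ} (hlam : lam ≠ 0) :
    finrank ℂ (Module.End.eigenspace ((LinearMap.adjoint d).comp d) lam)
  = finrank ℂ (Module.End.eigenspace (d.comp (LinearMap.adjoint d)) lam) := by
  set B := (LinearMap.adjoint d).comp d
  set A := d.comp (LinearMap.adjoint d)
  let EB := Module.End.eigenspace B lam
  let EA := Module.End.eigenspace A lam
  have hmem : ∀ x : EB, d (x : V) ∈ EA := by
    rintro ⟨x, hx⟩
    have hx' : LinearMap.adjoint d (d x) = lam • x := Module.End.mem_eigenspace_iff.mp hx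
    refine Module.End.mem_eigenspace_iff.mpr ?_
    show d (LinearMap.adjoint d (d x)) = lam • d x
    rw [hx', map_smul]
  let L : EB →ₗ[ℂ] EA := LinearMap.codRestrict EA ((d.comp EB.subtype)) (fun x => hmem x)
  have hinj : Function.Injective L := by
    rw [← LinearMap.ker_eq_bot]
    ext x
    simp only [LinearMap.mem_ker, Submodule.mem_bot]
    constructor
    · intro hx
      have hdx : d (x : V) = 0 := by have := congrArg Subtype.val hx; exact this
      have hx' : LinearMap.adjoint d (d (x : V)) = lam • (x : V) :=
        Module.End.mem_eigenspace_iff.mp x.2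
      rw [hdx, map_zero] at hx'
      have : (x : V) = 0 := by
        rcases smul_eq_zero.mp hx'.symm with h | h
        · exact absurd h hlam
        · exact h
      exact Subtype.ext this
    · intro hx; rw [hx, map_zero]
  have hsurj : Function.Surjective L := by
    rintro ⟨w, hw⟩
    have hw' : d (LinearMap.adjoint d w) = lam • w := Module.End.mem_eigenspace_iff.mp hw
    refine ⟨⟨lam⁻¹ • LinearMap.adjoint d w, ?_⟩, ?_⟩
    · refine Module.End.mem_eigenspace_iff.mpr ?_
      show LinearMap.adjoint d (d (lam⁻¹ • LinearMap.adjoint d w)) = _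
      rw [map_smul, map_smul, hw', map_smul, smul_smul, smul_smul, mul_comm]
    · apply Subtype.ext
      show d (lam⁻¹ • LinearMap.adjoint d w) = w
      rw [map_smul, hw', smul_smul, inv_mul_cancel₀ hlam, one_smul]
  exact (LinearEquiv.ofBijective L ⟨hinj, hsurj⟩).finrank_eq

/-- Splitting of nonzero eigenspaces of `A + B` when `A B = B A = 0`. -/
lemma finrank_eig_add (A B : V →ₗ[ℂ] V) (hAB : A.comp B = 0) (hBA : B.comp A = 0)
    {lam : ℂ} (hlam : lam ≠ 0) :
    finrank ℂ (Module.End.eigenspace (A + B) lam)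
      = finrank ℂ (Module.End.eigenspace A lam) + finrank ℂ (Module.End.eigenspace B lam) := by
  have hABz : ∀ x, A (B x) = 0 := fun x => congrFun (congrArg DFunLike.coe hAB) x
  have hBAz : ∀ x, B (A x) = 0 := fun x => congrFun (congrArg DFunLike.coe hBA) x
  have hsup : Module.End.eigenspace A lam ⊔ Module.End.eigenspace B lam
      = Module.End.eigenspace (A + B) lam := by
    apply le_antisymm
    · refine sup_le ?_ ?_
      · intro x hx
        have hx' : A x = lam • x := Module.End.mem_eigenspace_iff.mp hx
        refine Module.End.mem_eigenspace_iff.mpr ?_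
        have hBx : B x = 0 := by
          have : lam • B x = 0 := by rw [← map_smul, ← hx', hBAz x]
          rcases smul_eq_zero.mp this with h | h
          · exact absurd h hlam
          · exact h
        show A x + B x = lam • x
        rw [hx', hBx, add_zero]
      · intro x hx
        have hx' : B x = lam • x := Module.End.mem_eigenspace_iff.mp hx
        refine Module.End.mem_eigenspace_iff.mpr ?_
        have hAx : A x = 0 := by
          have : lam • A x = 0 := by rw [← map_smul, ← hx', hABz x]
          rcases smul_eq_zero.mp this with h | h
          · exact absurd h hlam
          · exact h
        show A x + B x = lam • x
        rw [hx', hAx, zero_add]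
    · intro x hx
      have hx' : A x + B x = lam • x := Module.End.mem_eigenspace_iff.mp hx
      have hu : lam⁻¹ • A x ∈ Module.End.eigenspace A lam := by
        refine Module.End.mem_eigenspace_iff.mpr ?_
        have hAAx : A (A x) = lam • A x := by
          have : A (A x + B x) = A (lam • x) := by rw [hx']
          rw [map_add, hABz x, add_zero, map_smul] at this
          rw [this]
        rw [map_smul, hAAx, smul_smul, smul_smul, mul_comm]
      have hw : lam⁻¹ • B x ∈ Module.End.eigenspace B lam := by
        refine Module.End.mem_eigenspace_iff.mpr ?_
        have hBBx : B (B x) = lam • B x := by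
          have : B (A x + B x) = B (lam • x) := by rw [hx']
          rw [map_add, hBAz x, zero_add, map_smul] at this
          rw [this]
        rw [map_smul, hBBx, smul_smul, smul_smul, mul_comm]
      refine Submodule.mem_sup.mpr ⟨lam⁻¹ • A x, hu, lam⁻¹ • B x, hw, ?_⟩
      rw [← smul_add, hx', smul_smul, inv_mul_cancel₀ hlam, one_smul]
  have hinf : Module.End.eigenspace A lam ⊓ Module.End.eigenspace B lam = ⊥ := by
    rw [eq_bot_iff]
    rintro x ⟨hxA, hxB⟩
    have hA : A x = lam • x := Module.End.mem_eigenspace_iff.mp hxA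
    have hB : B x = lam • x := Module.End.mem_eigenspace_iff.mp hxB
    have : lam • lam • x = 0 := by
      rw [← hB, ← map_smul, ← hA, hBAz x]
    simp only [Submodule.mem_bot]
    rcases smul_eq_zero.mp this with h | h
    · exact absurd h hlam
    · rcases smul_eq_zero.mp h with h' | h'
      · exact absurd h' hlam
      · exact h'
  have := Submodule.finrank_sup_add_finrank_inf_eq
    (Module.End.eigenspace A lam) (Module.End.eigenspace B lam)
  rw [hsup, hinf] at this
  simpa using this

/-- `d† d` is symmetric. -/
lemma isSymmetric_adjoint_comp_self (d : V →ₗ[ℂ] W) :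
    LinearMap.IsSymmetric ((LinearMap.adjoint d).comp d) := by
  intro x y
  show (inner ℂ (LinearMap.adjoint d (d x)) y : ℂ) = inner ℂ x (LinearMap.adjoint d (d y))
  rw [LinearMap.adjoint_inner_left, LinearMap.adjoint_inner_right]

end helpers2


/-- Finite-dimensional analytic Morse inequalities (Proposition 3.1):
for a cochain complex `0 → V⁰ → … → Vⁿ → 0` of finite-dimensional complex inner
product spaces with Hodge Laplacians `Δ_k = d_{k-1} d_{k-1}† + d_k† d_k`, a continuous
function `φ ≥ 0` with `φ(0) = 1`, and `ν_k = Tr φ(Δ_k) = Σ_λ φ(λ)·m_{k,λ}` computed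
from an orthonormal eigenbasis of `Δ_k`, the alternating sums of the `ν_k` dominate
the alternating sums of the Betti numbers `β_k = dim (ker d_k / range d_{k-1})`,
with equality for `k = n`. -/
theorem analytic_morse_inequalities
    (n : ℕ) (V : ℕ → Type*)
    [∀ i, NormedAddCommGroup (V i)] [∀ i, InnerProductSpace ℂ (V i)]
    [∀ i, FiniteDimensional ℂ (V i)]
    (d : ∀ i : ℕ, V i →ₗ[ℂ] V (i + 1))
    (hd : ∀ i : ℕ, (d (i + 1)).comp (d i) = 0)
    (hdn : d n = 0)
    (Δ : ∀ i : ℕ, V i →ₗ[ℂ] V i)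
    (hΔ0 : Δ 0 = (LinearMap.adjoint (d 0)).comp (d 0))
    (hΔ : ∀ i : ℕ, Δ (i + 1) =
      (d i).comp (LinearMap.adjoint (d i)) +
        (LinearMap.adjoint (d (i + 1))).comp (d (i + 1)))
    (β : ℕ → ℕ)
    (hβ0 : β 0 = Module.finrank ℂ (LinearMap.ker (d 0)))
    (hβ : ∀ i : ℕ, β (i + 1) = Module.finrank ℂ
      (LinearMap.ker (d (i + 1)) ⧸
        (LinearMap.range (d i)).comap (LinearMap.ker (d (i + 1))).subtype))
    (φ : ℝ → ℝ) (hφc : Continuous φ) (hφ0 : ∀ x, 0 ≤ φ x) (hφ1 : φ 0 = 1)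
    -- an orthonormal eigenbasis of each `Δ_k`, with (real) eigenvalues `μ k i`
    (e : ∀ k : ℕ, Basis (Fin (Module.finrank ℂ (V k))) ℂ (V k))
    (he : ∀ k, Orthonormal ℂ (e k))
    (μ : ∀ k : ℕ, Fin (Module.finrank ℂ (V k)) → ℝ)
    (heig : ∀ k i, Δ k (e k i) = (μ k i : ℂ) • e k i)
    (ν : ℕ → ℝ)
    (hν : ∀ k, ν k = ∑ i, φ (μ k i)) :
    (∀ k ≤ n,
      (∑ i ∈ Finset.range (k + 1), (-1 : ℝ) ^ (k - i) * (β i : ℝ)) ≤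
        ∑ i ∈ Finset.range (k + 1), (-1 : ℝ) ^ (k - i) * ν i) ∧
    (∑ i ∈ Finset.range (n + 1), (-1 : ℝ) ^ (n - i) * (β i : ℝ)) =
      ∑ i ∈ Finset.range (n + 1), (-1 : ℝ) ^ (n - i) * ν i := by
  classical
  -- the operators d† d
  have hBsym : ∀ k, ((LinearMap.adjoint (d k)).comp (d k)).IsSymmetric :=
    fun k => isSymmetric_adjoint_comp_self (d k)
  set κ : ∀ k, Fin (Module.finrank ℂ (V k)) → ℝ := fun k => (hBsym k).eigenvalues rfl with hκdef
  set g : ℝ → ℝ := fun x => if x = 0 then 0 else φ x with hg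
  set t : ℕ → ℝ := fun k => ∑ i, g (κ k i) with ht
  -- eigenvalue counts
  have hcountκ : ∀ k (lam : ℝ), ((Finset.univ.filter (fun i => κ k i = lam)).card : ℕ)
      = finrank ℂ (Module.End.eigenspace ((LinearMap.adjoint (d k)).comp (d k)) (lam : ℂ)) := by
    intro k lam
    rw [eig_count _ ((hBsym k).eigenvectorBasis rfl).toBasis (fun i => ((κ k i : ℝ) : ℂ))
      (fun i => by
        rw [OrthonormalBasis.coe_toBasis]
        exact (hBsym k).apply_eigenvectorBasis rfl i) (lam : ℂ)]
    congr 1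
    apply Finset.filter_congr
    intro i _
    exact_mod_cast Iff.rfl
  have hcountμ : ∀ k (lam : ℝ), ((Finset.univ.filter (fun i => μ k i = lam)).card : ℕ)
      = finrank ℂ (Module.End.eigenspace (Δ k) (lam : ℂ)) := by
    intro k lam
    rw [eig_count (Δ k) (e k) (fun i => ((μ k i : ℝ) : ℂ)) (fun i => heig k i) (lam : ℂ)]
    congr 1
    apply Finset.filter_congr
    intro i _
    exact_mod_cast Iff.rfl
  -- range ≤ ker
  have hrange_le : ∀ k, LinearMap.range (d k) ≤ LinearMap.ker (d (k + 1)) := by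
    intro k
    rintro x ⟨y, rfl⟩
    exact LinearMap.mem_ker.mpr (congrFun (congrArg DFunLike.coe (hd k)) y)
  -- Betti numbers via ranks
  have hβrank : ∀ k, β (k + 1) + finrank ℂ (LinearMap.range (d k))
      = finrank ℂ (LinearMap.ker (d (k + 1))) := by
    intro k
    rw [hβ k]
    have h1 := Submodule.finrank_quotient_add_finrank
      ((LinearMap.range (d k)).comap (LinearMap.ker (d (k + 1))).subtype)
    have h2 : finrank ℂ ((LinearMap.range (d k)).comap (LinearMap.ker (d (k + 1))).subtype)
        = finrank ℂ (LinearMap.range (d k)) := by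
      rw [LinearEquiv.finrank_eq (Submodule.equivMapOfInjective _
        (Submodule.injective_subtype _) _), Submodule.map_comap_subtype,
        inf_eq_right.mpr (hrange_le k)]
    omega
  -- Hodge: dim of zero eigenspace of Δ equals β
  have hm0 : ∀ k, finrank ℂ (Module.End.eigenspace (Δ k) ((0 : ℝ) : ℂ)) = β k := by
    intro k
    have h00 : ((0 : ℝ) : ℂ) = 0 := by norm_num
    rw [h00, Module.End.eigenspace_zero]
    match k with
    | 0 =>
      rw [hΔ0, ker_adjoint_comp_self, hβ0]
    | (k + 1) =>
      have hkerd : LinearMap.ker (LinearMap.adjoint (d k)) = (LinearMap.range (d k))ᗮ := by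
        ext x
        simp only [LinearMap.mem_ker, Submodule.mem_orthogonal]
        constructor
        · rintro hx _ ⟨y, rfl⟩
          rw [← LinearMap.adjoint_inner_right, hx, inner_zero_right]
        · intro hx
          have : ∀ y, (inner ℂ y (LinearMap.adjoint (d k) x) : ℂ) = 0 := by
            intro y
            rw [LinearMap.adjoint_inner_right]
            exact hx (d k y) ⟨y, rfl⟩
          exact inner_self_eq_zero.mp (this _)
      have hker : LinearMap.ker (Δ (k + 1))
          = LinearMap.ker (d (k + 1)) ⊓ (LinearMap.range (d k))ᗮ := by
        rw [hΔ k, ker_laplacian, hkerd, inf_comm]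
      rw [hker]
      have h3 := finrank_inf_orthogonal (LinearMap.range (d k)) (LinearMap.ker (d (k + 1)))
        (hrange_le k)
      have h4 := hβrank k
      omega
  -- nonzero eigenspaces split
  have hmsucc : ∀ k (lam : ℝ), lam ≠ 0 →
      finrank ℂ (Module.End.eigenspace (Δ (k + 1)) (lam : ℂ))
        = finrank ℂ (Module.End.eigenspace ((LinearMap.adjoint (d (k + 1))).comp (d (k + 1))) (lam : ℂ))
          + finrank ℂ (Module.End.eigenspace ((LinearMap.adjoint (d k)).comp (d k)) (lam : ℂ)) := by
    intro k lam hl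
    have hl' : ((lam : ℝ) : ℂ) ≠ 0 := by exact_mod_cast hl
    have hadj : (LinearMap.adjoint (d k)).comp (LinearMap.adjoint (d (k + 1))) = 0 := by
      rw [← LinearMap.adjoint_comp, hd k, map_zero]
    have hA : ((d k).comp (LinearMap.adjoint (d k))).comp
        ((LinearMap.adjoint (d (k + 1))).comp (d (k + 1))) = 0 := by
      ext x
      simp only [LinearMap.comp_apply, LinearMap.zero_apply]
      have : LinearMap.adjoint (d k) (LinearMap.adjoint (d (k + 1)) (d (k + 1) x)) = 0 :=
        congrFun (congrArg DFunLike.coe hadj) (d (k + 1) x)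
      rw [this, map_zero]
    have hB : ((LinearMap.adjoint (d (k + 1))).comp (d (k + 1))).comp
        ((d k).comp (LinearMap.adjoint (d k))) = 0 := by
      ext x
      simp only [LinearMap.comp_apply, LinearMap.zero_apply]
      have : d (k + 1) (d k (LinearMap.adjoint (d k) x)) = 0 :=
        congrFun (congrArg DFunLike.coe (hd k)) (LinearMap.adjoint (d k) x)
      rw [this, map_zero]
    rw [hΔ k, finrank_eig_add _ _ hA hB hl',
      ← finrank_eig_adjoint_comm (d k) hl']
    omega
  -- the trace identities
  have hν0' : ν 0 = (β 0 : ℝ) + t 0 := by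
    set S : Finset ℝ := (image (μ 0) univ) ∪ (image (κ 0) univ) ∪ {0} with hS
    have hSμ : ∀ i, μ 0 i ∈ S := fun i => by simp [hS]
    have hSκ : ∀ i, κ 0 i ∈ S := fun i => by simp [hS]
    have h0S : (0 : ℝ) ∈ S := by simp [hS]
    rw [hν 0, sum_g_count (μ 0) S hSμ φ]
    have htS : t 0 = ∑ x ∈ S, g x
        * ((Finset.univ.filter (fun i => κ 0 i = x)).card : ℝ) := sum_g_count (κ 0) S hSκ g
    have hβS : (β 0 : ℝ) = ∑ x ∈ S, (if x = 0 then (β 0 : ℝ) else 0) := by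
      rw [Finset.sum_ite_eq' S (0 : ℝ) (fun _ => (β 0 : ℝ)), if_pos h0S]
    rw [htS, hβS, ← Finset.sum_add_distrib]
    refine Finset.sum_congr rfl fun x hx => ?_
    by_cases hx0 : x = 0
    · subst hx0
      rw [if_pos rfl, hφ1, one_mul, hcountμ 0 0, hm0 0]
      have : g 0 = 0 := by simp [hg]
      rw [this, zero_mul, add_zero]
    · rw [if_neg hx0]
      have hgx : g x = φ x := by simp [hg, hx0]
      rw [hgx, zero_add, hcountμ 0 x, hcountκ 0 x, hΔ0]
  have hνsucc : ∀ k, ν (k + 1) = (β (k + 1) : ℝ) + (t (k + 1) + t k) := by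
    intro k
    set S : Finset ℝ := (image (μ (k + 1)) univ) ∪ (image (κ (k + 1)) univ)
      ∪ (image (κ k) univ) ∪ {0} with hS
    have hSμ : ∀ i, μ (k + 1) i ∈ S := fun i => by simp [hS]
    have hSκ1 : ∀ i, κ (k + 1) i ∈ S := fun i => by simp [hS]
    have hSκ0 : ∀ i, κ k i ∈ S := fun i => by simp [hS]
    have h0S : (0 : ℝ) ∈ S := by simp [hS]
    rw [hν (k + 1), sum_g_count (μ (k + 1)) S hSμ φ]
    have ht1 : t (k + 1) = ∑ x ∈ S, g x
        * ((Finset.univ.filter (fun i => κ (k + 1) i = x)).card : ℝ) :=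
      sum_g_count (κ (k + 1)) S hSκ1 g
    have ht0 : t k = ∑ x ∈ S, g x
        * ((Finset.univ.filter (fun i => κ k i = x)).card : ℝ) := sum_g_count (κ k) S hSκ0 g
    have hβS : (β (k + 1) : ℝ) = ∑ x ∈ S, (if x = 0 then (β (k + 1) : ℝ) else 0) := by
      rw [Finset.sum_ite_eq' S (0 : ℝ) (fun _ => (β (k + 1) : ℝ)), if_pos h0S]
    rw [ht1, ht0, hβS, ← Finset.sum_add_distrib, ← Finset.sum_add_distrib]
    refine Finset.sum_congr rfl fun x hx => ?_
    by_cases hx0 : x = 0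
    · subst hx0
      rw [if_pos rfl, hφ1, one_mul, hcountμ (k + 1) 0, hm0 (k + 1)]
      have : g 0 = 0 := by simp [hg]
      rw [this, zero_mul, zero_mul, add_zero, add_zero]
    · rw [if_neg hx0]
      have hgx : g x = φ x := by simp [hg, hx0]
      rw [hgx, zero_add, hcountμ (k + 1) x, hcountκ (k + 1) x, hcountκ k x,
        hmsucc k x hx0]
      push_cast
      ring
  -- nonnegativity and vanishing of t
  have htnonneg : ∀ k, 0 ≤ t k := by
    intro k
    show 0 ≤ ∑ i, g (κ k i)
    refine Finset.sum_nonneg fun i _ => ?_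
    by_cases h : κ k i = 0 <;> simp [hg, h, hφ0 _]
  have htn : t n = 0 := by
    have hκn : ∀ i, κ n i = 0 := by
      intro i
      have h := (hBsym n).apply_eigenvectorBasis rfl i
      have hB0 : ((LinearMap.adjoint (d n)).comp (d n)) (((hBsym n).eigenvectorBasis rfl) i)
          = 0 := by
        show LinearMap.adjoint (d n) (d n (((hBsym n).eigenvectorBasis rfl) i)) = 0
        have : d n (((hBsym n).eigenvectorBasis rfl) i) = 0 :=
          (DFunLike.congr_fun hdn _).trans rfl
        rw [this, map_zero]
      rw [hB0] at h
      have hne : ((hBsym n).eigenvectorBasis rfl) i ≠ 0 := by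
        have := ((hBsym n).eigenvectorBasis rfl).toBasis.ne_zero i
        rwa [OrthonormalBasis.coe_toBasis] at this
      rcases smul_eq_zero.mp h.symm with h' | h'
      · exact RCLike.ofReal_eq_zero.mp h'
      · exact absurd h' hne
    show (∑ i, g (κ n i)) = 0
    simp only [hκn]
    simp [hg]
  -- alternating sums
  have hmain : ∀ k, ∑ i ∈ Finset.range (k + 1), (-1 : ℝ) ^ (k - i) * (ν i - (β i : ℝ))
      = t k := by
    intro k
    induction k with
    | zero =>
      rw [Finset.sum_range_one]
      simp only [Nat.sub_zero, pow_zero, one_mul]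
      rw [hν0']
      ring
    | succ k ih =>
      rw [Finset.sum_range_succ]
      have hflip : ∀ i ∈ Finset.range (k + 1), (-1 : ℝ) ^ (k + 1 - i) * (ν i - (β i : ℝ))
          = -((-1 : ℝ) ^ (k - i) * (ν i - (β i : ℝ))) := by
        intro i hi
        have hik : i ≤ k := Nat.lt_succ_iff.mp (Finset.mem_range.mp hi)
        have : k + 1 - i = (k - i) + 1 := by omega
        rw [this, pow_succ]
        ring
      rw [Finset.sum_congr rfl hflip, Finset.sum_neg_distrib, ih, Nat.sub_self, pow_zero,
        one_mul, hνsucc k]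
      ring
  have hsplit : ∀ k, ∑ i ∈ Finset.range (k + 1), (-1 : ℝ) ^ (k - i) * (ν i - (β i : ℝ))
      = (∑ i ∈ Finset.range (k + 1), (-1 : ℝ) ^ (k - i) * ν i)
        - ∑ i ∈ Finset.range (k + 1), (-1 : ℝ) ^ (k - i) * (β i : ℝ) := by
    intro k
    rw [← Finset.sum_sub_distrib]
    exact Finset.sum_congr rfl fun i _ => by ring
  constructor
  · intro k _
    have h1 := hmain k
    rw [hsplit k] at h1
    have h2 := htnonneg k
    linarith
  · have h1 := hmain n
    rw [hsplit n, htn] at h1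
    linarith
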